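/- Let (X, 𝒰, ∫) be a Daniell space and let f : X → ℝ. If f ≃ ∑ f_n and f ≃ ∑ g_n with f_n, g_n ∈ 𝒰, then ∑_{n=1}^∞ ∫ f_n = ∑_{n=1}^∞ ∫ g_n. -/

import Mathlib

open Filter Topology

/-- A Daniell space: a Riesz space `U` of real-valued functions on `X` together with a
positive linear functional `integral` satisfying the Daniell continuity condition (II). -/
structure DaniellSpace (X : Type*) where
  U : Set (X → ℝ)
  integral : (X → ℝ) → ℝ
  zero_mem : (0 : X → ℝ) ∈ U
  add_mem : ∀ {f g : X → ℝ}, f ∈ U → g ∈ U → f + g ∈ U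
  smul_mem : ∀ (c : ℝ) {f : X → ℝ}, f ∈ U → c • f ∈ U
  sup_mem : ∀ {f g : X → ℝ}, f ∈ U → g ∈ U → f ⊔ g ∈ U
  inf_mem : ∀ {f g : X → ℝ}, f ∈ U → g ∈ U → f ⊓ g ∈ U
  integral_add : ∀ {f g : X → ℝ}, f ∈ U → g ∈ U →
    integral (f + g) = integral f + integral g
  integral_smul : ∀ (c : ℝ) {f : X → ℝ}, f ∈ U → integral (c • f) = c * integral f
  integral_nonneg : ∀ {f : X → ℝ}, f ∈ U → (∀ x, 0 ≤ f x) → 0 ≤ integral f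
  integral_tendsto_zero : ∀ f : ℕ → X → ℝ, (∀ n, f n ∈ U) → Antitone f →
    (∀ x, Tendsto (fun n => f n x) atTop (𝓝 (0 : ℝ))) →
    Tendsto (fun n => integral (f n)) atTop (𝓝 (0 : ℝ))

/-- `f ≃ ∑ fₙ` : the `fₙ` belong to `U`, `∑ ∫|fₙ| < ∞`, and `f x = ∑ fₙ x` at every
point where the series converges absolutely. -/
def DaniellSpace.Rep {X : Type*} (D : DaniellSpace X) (f : X → ℝ) (fs : ℕ → X → ℝ) : Prop :=
  (∀ n, fs n ∈ D.U) ∧ (Summable fun n => D.integral |fs n|) ∧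
  ∀ x, (Summable fun n => |fs n x|) → HasSum (fun n => fs n x) (f x)

/-- The extension `𝒰*` of `𝒰`. -/
def DaniellSpace.Ustar {X : Type*} (D : DaniellSpace X) : Set (X → ℝ) :=
  {f | ∃ fs, D.Rep f fs}

-- The integral on `𝒰*`: `∫ f = ∑ ∫ fₙ` for any representation `f ≃ ∑ fₙ`
-- (the value is independent of the representation).
open Classical in
noncomputable def DaniellSpace.integralStar {X : Type*} (D : DaniellSpace X)
    (f : X → ℝ) : ℝ :=
  if h : ∃ fs, D.Rep f fs then ∑' n, D.integral (h.choose n) else 0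

/-- A Daniell space is complete if `f ≃ ∑ fₙ` with all `fₙ ∈ 𝒰` implies `f ∈ 𝒰`. -/
def DaniellSpace.Complete {X : Type*} (D : DaniellSpace X) : Prop :=
  ∀ (f : X → ℝ) (fs : ℕ → X → ℝ), D.Rep f fs → f ∈ D.U

/-- A null set: its characteristic function is a null function. -/
def DaniellSpace.NullSet {X : Type*} (D : DaniellSpace X) (S : Set X) : Prop :=
  S.indicator (fun _ => (1 : ℝ)) ∈ D.U ∧ D.integral (S.indicator fun _ => (1 : ℝ)) = 0

namespace DaniellSpace

variable {X : Type*} (D : DaniellSpace X)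

lemma neg_mem {f : X → ℝ} (hf : f ∈ D.U) : -f ∈ D.U := by
  simpa using D.smul_mem (-1) hf

lemma sub_mem {f g : X → ℝ} (hf : f ∈ D.U) (hg : g ∈ D.U) : f - g ∈ D.U := by
  simpa [sub_eq_add_neg] using D.add_mem hf (D.neg_mem hg)

lemma abs_mem {f : X → ℝ} (hf : f ∈ D.U) : |f| ∈ D.U := by
  have h : |f| = f ⊔ (-f) := by
    ext x; simp [abs_eq_max_neg]
  rw [h]; exact D.sup_mem hf (D.neg_mem hf)

lemma integral_neg {f : X → ℝ} (hf : f ∈ D.U) : D.integral (-f) = -D.integral f := by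
  have := D.integral_smul (-1) hf
  simpa using this

lemma integral_sub {f g : X → ℝ} (hf : f ∈ D.U) (hg : g ∈ D.U) :
    D.integral (f - g) = D.integral f - D.integral g := by
  have := D.integral_add hf (D.neg_mem hg)
  simpa [sub_eq_add_neg, D.integral_neg hg] using this

lemma integral_mono {f g : X → ℝ} (hf : f ∈ D.U) (hg : g ∈ D.U) (h : f ≤ g) :
    D.integral f ≤ D.integral g := by
  have h0 : 0 ≤ D.integral (g - f) :=
    D.integral_nonneg (D.sub_mem hg hf) (fun x => by have := h x; simp [Pi.sub_apply]; linarith)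
  have := D.integral_sub hg hf
  linarith

lemma abs_integral_le {f : X → ℝ} (hf : f ∈ D.U) : |D.integral f| ≤ D.integral |f| := by
  rw [abs_le]
  constructor
  · have := D.integral_mono (D.neg_mem hf) (D.abs_mem hf)
      (fun x => by simpa using neg_le_abs (f x))
    rw [D.integral_neg hf] at this
    linarith
  · exact D.integral_mono hf (D.abs_mem hf) (fun x => le_abs_self (f x))

lemma sum_mem {h : ℕ → X → ℝ} (hh : ∀ n, h n ∈ D.U) (M : ℕ) :
    (∑ n ∈ Finset.range M, h n) ∈ D.U := by
  induction M with
  | zero => simpa using D.zero_mem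
  | succ k ih => rw [Finset.sum_range_succ]; exact D.add_mem ih (hh k)

lemma integral_finset_sum {h : ℕ → X → ℝ} (hh : ∀ n, h n ∈ D.U) (M : ℕ) :
    D.integral (∑ n ∈ Finset.range M, h n) = ∑ n ∈ Finset.range M, D.integral (h n) := by
  induction M with
  | zero =>
      simp only [Finset.range_zero, Finset.sum_empty]
      have := D.integral_smul 0 D.zero_mem
      simpa using this
  | succ k ih =>
      rw [Finset.sum_range_succ, Finset.sum_range_succ, D.integral_add (D.sum_mem hh k) (hh k), ih]

lemma key_half {X : Type*} (D : DaniellSpace X) (d : ℕ → X → ℝ) (hd : ∀ n, d n ∈ D.U)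
    (hsum : Summable fun n => D.integral |d n|)
    (hzero : ∀ x, (Summable fun n => |d n x|) → HasSum (fun n => d n x) 0)
    (M : ℕ) :
    ∑ n ∈ Finset.range M, D.integral (d n) ≤ ∑' k, D.integral |d (k + M)| := by
  have habsU : ∀ n, |d n| ∈ D.U := fun n => D.abs_mem (hd n)
  set s : X → ℝ := ∑ n ∈ Finset.range M, d n with hs
  have hsU : s ∈ D.U := D.sum_mem hd M
  set sp : X → ℝ := s ⊔ 0 with hsp
  have hspU : sp ∈ D.U := D.sup_mem hsU D.zero_mem
  set t : ℕ → X → ℝ := fun N => ∑ k ∈ Finset.range N, |d (k + M)| with ht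
  have htU : ∀ N, t N ∈ D.U := fun N => D.sum_mem (fun k => habsU (k + M)) N
  set φ : ℕ → X → ℝ := fun N => sp ⊓ t N with hφ
  have hφU : ∀ N, φ N ∈ D.U := fun N => D.inf_mem hspU (htU N)
  set ψ : ℕ → X → ℝ := fun N => sp - φ N with hψ
  have hψU : ∀ N, ψ N ∈ D.U := fun N => D.sub_mem hspU (hφU N)
  -- tail summability
  have htail : Summable fun k => D.integral |d (k + M)| := (summable_nat_add_iff M).2 hsum
  -- pointwise facts
  have hsx : ∀ x, s x = ∑ n ∈ Finset.range M, d n x := fun x => by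
    simp [hs, Finset.sum_apply]
  have htx : ∀ N x, t N x = ∑ k ∈ Finset.range N, |d (k + M) x| := fun N x => by
    simp [ht, Finset.sum_apply, Pi.abs_apply]
  -- monotone of t
  have htmono : Monotone t := by
    intro a b hab x
    rw [htx, htx]
    exact Finset.sum_le_sum_of_subset_of_nonneg (Finset.range_subset_range.2 hab)
      (fun i _ _ => abs_nonneg _)
  have hψanti : Antitone ψ := by
    intro a b hab x
    simp only [hψ, Pi.sub_apply, hφ, Pi.inf_apply]
    exact sub_le_sub_left (inf_le_inf_left _ (htmono hab x)) _
  -- pointwise convergence: φ N x → sp x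
  have hφtend : ∀ x, Tendsto (fun N => φ N x) atTop (𝓝 (sp x)) := by
    intro x
    have hφx : ∀ N, φ N x = min (sp x) (t N x) := fun N => by
      simp [hφ, Pi.inf_apply]
    simp only [hφx]
    by_cases hx : Summable fun n => |d n x|
    · -- absolutely convergent case
      have hx' : Summable fun n => d n x := hx.of_abs
      have hxtail : Summable fun k => |d (k + M) x| :=
        (summable_nat_add_iff (f := fun n => |d n x|) M).2 hx
      have hxtail' : Summable fun k => d (k + M) x :=
        (summable_nat_add_iff (f := fun n => d n x) M).2 hx'
      have h0 : ∑' n, d n x = 0 := (hzero x hx).tsum_eq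
      have hsplit := Summable.sum_add_tsum_nat_add (f := fun n => d n x) M hx'
      rw [h0] at hsplit
      have hsval : s x = -(∑' k, d (k + M) x) := by
        rw [hsx]; linarith
      have habs_le : |s x| ≤ ∑' k, |d (k + M) x| := by
        rw [hsval, abs_neg]
        have hn := norm_tsum_le_tsum_norm (f := fun k => d (k + M) x)
          (by simpa [Real.norm_eq_abs] using hxtail)
        simpa [Real.norm_eq_abs] using hn
      have hsp_le : sp x ≤ ∑' k, |d (k + M) x| := by
        have : sp x = max (s x) 0 := by simp [hsp, Pi.sup_apply]
        rw [this]
        exact max_le ((le_abs_self _).trans habs_le) (tsum_nonneg (fun k => abs_nonneg _))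
      have httend : Tendsto (fun N => t N x) atTop (𝓝 (∑' k, |d (k + M) x|)) := by
        simp only [htx]
        exact hxtail.hasSum.tendsto_sum_nat
      have hmin : Tendsto (fun N => min (sp x) (t N x)) atTop
          (𝓝 (min (sp x) (∑' k, |d (k + M) x|))) := tendsto_const_nhds.min httend
      rwa [min_eq_left hsp_le] at hmin
    · -- divergent case: t N x → ∞
      have hxtail : ¬ Summable fun k => |d (k + M) x| := fun h =>
        hx ((summable_nat_add_iff (f := fun n => |d n x|) M).1 h)
      have httop : Tendsto (fun N => t N x) atTop atTop := by
        have := (not_summable_iff_tendsto_nat_atTop_of_nonneg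
          (f := fun k => |d (k + M) x|) (fun k => abs_nonneg _)).1 hxtail
        refine this.congr fun N => ?_
        rw [htx]
      have hconst : Tendsto (fun _ : ℕ => sp x) atTop (𝓝 (sp x)) := tendsto_const_nhds
      refine hconst.congr' ?_
      filter_upwards [httop.eventually_ge_atTop (sp x)] with N hN
      exact (min_eq_left hN).symm
  have hψtend : ∀ x, Tendsto (fun N => ψ N x) atTop (𝓝 0) := by
    intro x
    have hc : Tendsto (fun _ : ℕ => sp x) atTop (𝓝 (sp x)) := tendsto_const_nhds
    have h := hc.sub (hφtend x)
    rw [sub_self] at h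
    refine h.congr fun N => ?_
    simp [hψ, Pi.sub_apply]
  have hInt := D.integral_tendsto_zero ψ hψU hψanti hψtend
  have hψint : ∀ N, D.integral (ψ N) = D.integral sp - D.integral (φ N) := fun N =>
    D.integral_sub hspU (hφU N)
  have hφint_tend : Tendsto (fun N => D.integral (φ N)) atTop (𝓝 (D.integral sp)) := by
    have hc : Tendsto (fun _ : ℕ => D.integral sp) atTop (𝓝 (D.integral sp)) :=
      tendsto_const_nhds
    have h := hc.sub hInt
    rw [sub_zero] at h
    refine h.congr fun N => ?_
    rw [hψint]; ring
  have hφle : ∀ N, D.integral (φ N) ≤ ∑' k, D.integral |d (k + M)| := by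
    intro N
    have h1 : D.integral (φ N) ≤ D.integral (t N) :=
      D.integral_mono (hφU N) (htU N) (fun x => by
        simp only [hφ, Pi.inf_apply]; exact inf_le_right)
    have h2 : D.integral (t N) = ∑ k ∈ Finset.range N, D.integral |d (k + M)| :=
      D.integral_finset_sum (fun k => habsU (k + M)) N
    have h3 : ∑ k ∈ Finset.range N, D.integral |d (k + M)| ≤ ∑' k, D.integral |d (k + M)| :=
      htail.sum_le_tsum _ (fun k _ => D.integral_nonneg (habsU _) (fun x => by
        simp only [Pi.abs_apply]; exact abs_nonneg _))
    linarith
  have hsple : D.integral sp ≤ ∑' k, D.integral |d (k + M)| :=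
    le_of_tendsto hφint_tend (Filter.Eventually.of_forall hφle)
  have hsle : D.integral s ≤ D.integral sp :=
    D.integral_mono hsU hspU le_sup_left
  calc ∑ n ∈ Finset.range M, D.integral (d n) = D.integral s :=
        (D.integral_finset_sum hd M).symm
    _ ≤ D.integral sp := hsle
    _ ≤ _ := hsple

lemma key {X : Type*} (D : DaniellSpace X) (d : ℕ → X → ℝ) (hd : ∀ n, d n ∈ D.U)
    (hsum : Summable fun n => D.integral |d n|)
    (hzero : ∀ x, (Summable fun n => |d n x|) → HasSum (fun n => d n x) 0) :
    ∑' n, D.integral (d n) = 0 := by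
  have hIsum : Summable fun n => D.integral (d n) := by
    refine Summable.of_norm_bounded hsum fun n => ?_
    simpa [Real.norm_eq_abs] using D.abs_integral_le (hd n)
  -- lower bound: apply key_half to -d
  have hneg : ∀ M, -∑ n ∈ Finset.range M, D.integral (d n) ≤ ∑' k, D.integral |d (k + M)| := by
    intro M
    have habs : ∀ n, |(-d n : X → ℝ)| = |d n| := fun n => abs_neg (d n)
    have h := D.key_half (fun n => -d n) (fun n => D.neg_mem (hd n))
      (by simpa [habs] using hsum)
      (fun x hx => by
        have hx' : Summable fun n => |d n x| := by
          refine hx.congr fun n => ?_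
          simp [Pi.neg_apply, abs_neg]
        have := (hzero x hx').neg
        simpa using this) M
    simp only [habs] at h
    calc -∑ n ∈ Finset.range M, D.integral (d n)
        = ∑ n ∈ Finset.range M, D.integral (-d n) := by
          rw [← Finset.sum_neg_distrib]
          exact Finset.sum_congr rfl fun n _ => (D.integral_neg (hd n)).symm
      _ ≤ _ := h
  have hpos := fun M => D.key_half d hd hsum hzero M
  -- the tails tend to 0
  have htails : Tendsto (fun M => ∑' k, D.integral |d (k + M)|) atTop (𝓝 0) := by
    have h1 : ∀ M, ∑' k, D.integral |d (k + M)|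
        = ∑' n, D.integral |d n| - ∑ n ∈ Finset.range M, D.integral |d n| := by
      intro M
      have := Summable.sum_add_tsum_nat_add (f := fun n => D.integral |d n|) M hsum
      linarith
    simp only [h1]
    have h2 := hsum.hasSum.tendsto_sum_nat
    have hc : Tendsto (fun _ : ℕ => ∑' n, D.integral |d n|) atTop
        (𝓝 (∑' n, D.integral |d n|)) := tendsto_const_nhds
    have h3 := hc.sub h2
    rw [sub_self] at h3
    exact h3
  -- partial sums tend to the tsum
  have hP := hIsum.hasSum.tendsto_sum_nat
  have habs_lim : |∑' n, D.integral (d n)| ≤ 0 := by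
    have habsP : Tendsto (fun M => |∑ n ∈ Finset.range M, D.integral (d n)|) atTop
        (𝓝 |∑' n, D.integral (d n)|) := hP.abs
    refine le_of_tendsto_of_tendsto' habsP htails fun M => ?_
    rw [abs_le]
    exact ⟨by linarith [hneg M], hpos M⟩
  have := abs_nonneg (∑' n, D.integral (d n))
  have h0 : |∑' n, D.integral (d n)| = 0 := le_antisymm habs_lim this
  exact abs_eq_zero.1 h0

end DaniellSpace


/-- If `f ≃ ∑ fₙ` and `f ≃ ∑ gₙ`, then `∑ ∫fₙ = ∑ ∫gₙ`. -/
theorem daniell_rep_integral_well_defined {X : Type*} [Nonempty X] (D : DaniellSpace X)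
    (f : X → ℝ) (fs gs : ℕ → X → ℝ) (hfs : D.Rep f fs) (hgs : D.Rep f gs) :
    ∑' n, D.integral (fs n) = ∑' n, D.integral (gs n) := by
  obtain ⟨hfsU, hfsS, hfsP⟩ := hfs
  obtain ⟨hgsU, hgsS, hgsP⟩ := hgs
  set d : ℕ → X → ℝ := fun n => if Even n then fs (n / 2) else -gs (n / 2) with hd
  have hde : ∀ k, d (2 * k) = fs k := fun k => by
    simp [hd, even_two_mul, Nat.mul_div_cancel_left k (by norm_num : 0 < 2)]
  have hdo : ∀ k, d (2 * k + 1) = -gs k := fun k => by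
    have h1 : ¬ Even (2 * k + 1) := by simp [Nat.even_add_one, parity_simps]
    have h2 : (2 * k + 1) / 2 = k := by omega
    simp [hd, h1, h2]
  have hdU : ∀ n, d n ∈ D.U := fun n => by
    by_cases h : Even n
    · simpa [hd, h] using hfsU (n / 2)
    · simpa [hd, h] using D.neg_mem (hgsU (n / 2))
  have htwoinj : Function.Injective (fun k : ℕ => 2 * k) :=
    mul_right_injective₀ (two_ne_zero' ℕ)
  have hoddinj : Function.Injective (fun k : ℕ => 2 * k + 1) :=
    (add_left_injective 1).comp htwoinj
  -- Summability of ∫|d n|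
  have habssum : Summable fun n => D.integral |d n| := by
    have he : HasSum (fun k => D.integral |d (2 * k)|) (∑' n, D.integral |fs n|) := by
      refine HasSum.congr_fun hfsS.hasSum fun k => ?_
      rw [hde]
    have ho : HasSum (fun k => D.integral |d (2 * k + 1)|) (∑' n, D.integral |gs n|) := by
      refine HasSum.congr_fun hgsS.hasSum fun k => ?_
      rw [hdo, abs_neg]
    exact (HasSum.even_add_odd (f := fun n => D.integral |d n|) he ho).summable
  -- pointwise
  have hzero : ∀ x, (Summable fun n => |d n x|) → HasSum (fun n => d n x) 0 := by
    intro x hx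
    have hxe : Summable fun k => |fs k x| := by
      have := hx.comp_injective htwoinj
      refine this.congr fun k => ?_
      simp [Function.comp, hde]
    have hxo : Summable fun k => |gs k x| := by
      have := hx.comp_injective hoddinj
      refine this.congr fun k => ?_
      simp [Function.comp, hdo]
    have he : HasSum (fun k => d (2 * k) x) (f x) := by
      refine HasSum.congr_fun (hfsP x hxe) fun k => ?_
      rw [hde]
    have ho : HasSum (fun k => d (2 * k + 1) x) (-f x) := by
      refine HasSum.congr_fun (hgsP x hxo).neg fun k => ?_
      rw [hdo]; simp
    have h := HasSum.even_add_odd (f := fun n => d n x) he ho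
    simpa using h
  have hkey := D.key d hdU habssum hzero
  -- split the tsum
  have hIf : Summable fun n => D.integral (fs n) := by
    refine Summable.of_norm_bounded hfsS fun n => ?_
    simpa [Real.norm_eq_abs] using D.abs_integral_le (hfsU n)
  have hIg : Summable fun n => D.integral (gs n) := by
    refine Summable.of_norm_bounded hgsS fun n => ?_
    simpa [Real.norm_eq_abs] using D.abs_integral_le (hgsU n)
  have he : HasSum (fun k => D.integral (d (2 * k))) (∑' n, D.integral (fs n)) := by
    refine HasSum.congr_fun hIf.hasSum fun k => ?_
    rw [hde]
  have ho : HasSum (fun k => D.integral (d (2 * k + 1))) (-∑' n, D.integral (gs n)) := by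
    refine HasSum.congr_fun hIg.hasSum.neg fun k => ?_
    rw [hdo, D.integral_neg (hgsU k)]
  have hsplit := HasSum.even_add_odd (f := fun n => D.integral (d n)) he ho
  have := hsplit.tsum_eq
  rw [hkey] at this
  linarith
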